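/- Let c > 0, k > 0, s > 0, and 0 ≤ S₁ < S₂. Define h_S(λ) = (1 − √(S/λ))·log(1 + c·e^{k·S}·λ^s) for λ > 0. Then there exists Λ such that for all λ ≥ Λ, h_{S₂}(λ) > h_{S₁}(λ). -/

import Mathlib

open Filter Real Topology

private lemma aux_sqrt_log (S a s : ℝ) (hS : 0 ≤ S) (ha : 0 < a) (hs : 0 < s) :
    Tendsto (fun lam : ℝ => Real.sqrt (S / lam) * Real.log (1 + a * lam ^ s))
      atTop (𝓝 0) := by
  have hg : Tendsto (fun lam : ℝ =>
      Real.sqrt S * (Real.log (1 + a) / lam ^ (1/2 : ℝ) + s * (Real.log lam / lam ^ (1/2 : ℝ))))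
      atTop (𝓝 0) := by
    have h1 : Tendsto (fun lam : ℝ => Real.log (1 + a) / lam ^ (1/2 : ℝ)) atTop (𝓝 0) :=
      tendsto_const_nhds.div_atTop (tendsto_rpow_atTop (by norm_num))
    have h2 : Tendsto (fun lam : ℝ => Real.log lam / lam ^ (1/2 : ℝ)) atTop (𝓝 0) :=
      (isLittleO_log_rpow_atTop (by norm_num : (0:ℝ) < 1/2)).tendsto_div_nhds_zero
    have := ((h1.add (h2.const_mul s)).const_mul (Real.sqrt S))
    simpa using this
  refine squeeze_zero' ?_ ?_ hg
  · filter_upwards [eventually_ge_atTop (1:ℝ)] with lam hlam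
    have hlam0 : (0:ℝ) < lam := lt_of_lt_of_le one_pos hlam
    have : (0:ℝ) ≤ a * lam ^ s := le_of_lt (mul_pos ha (Real.rpow_pos_of_pos hlam0 s))
    exact mul_nonneg (Real.sqrt_nonneg _) (Real.log_nonneg (by linarith))
  · filter_upwards [eventually_ge_atTop (1:ℝ)] with lam hlam
    have hlam0 : (0:ℝ) < lam := lt_of_lt_of_le one_pos hlam
    have hls : (1:ℝ) ≤ lam ^ s := Real.one_le_rpow hlam hs.le
    have hlog : Real.log (1 + a * lam ^ s) ≤ Real.log (1 + a) + s * Real.log lam := by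
      have hle : 1 + a * lam ^ s ≤ (1 + a) * lam ^ s := by nlinarith
      have hpos : (0:ℝ) < 1 + a * lam ^ s := by nlinarith
      calc Real.log (1 + a * lam ^ s) ≤ Real.log ((1 + a) * lam ^ s) :=
            Real.log_le_log hpos hle
        _ = Real.log (1 + a) + s * Real.log lam := by
            rw [Real.log_mul (by linarith) (by positivity), Real.log_rpow hlam0]
    have hsq : Real.sqrt (S / lam) = Real.sqrt S / lam ^ (1/2 : ℝ) := by
      rw [Real.sqrt_div hS, Real.sqrt_eq_rpow lam]
    have hlogpos : 0 ≤ Real.log (1 + a * lam ^ s) := by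
      have : (0:ℝ) ≤ a * lam ^ s := le_of_lt (mul_pos ha (Real.rpow_pos_of_pos hlam0 s))
      exact Real.log_nonneg (by linarith)
    have hrp : (0:ℝ) < lam ^ (1/2 : ℝ) := Real.rpow_pos_of_pos hlam0 _
    rw [hsq]
    calc Real.sqrt S / lam ^ (1/2:ℝ) * Real.log (1 + a * lam ^ s)
        ≤ Real.sqrt S / lam ^ (1/2:ℝ) * (Real.log (1 + a) + s * Real.log lam) := by
          apply mul_le_mul_of_nonneg_left hlog (by positivity)
      _ = Real.sqrt S * (Real.log (1 + a) / lam ^ (1/2:ℝ)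
            + s * (Real.log lam / lam ^ (1/2:ℝ))) := by ring

private lemma aux_log_diff (a₁ a₂ s : ℝ) (h1 : 0 < a₁) (h2 : 0 < a₂) (hs : 0 < s) :
    Tendsto (fun lam : ℝ => Real.log (1 + a₂ * lam ^ s) - Real.log (1 + a₁ * lam ^ s))
      atTop (𝓝 (Real.log (a₂ / a₁))) := by
  have hratio : Tendsto (fun lam : ℝ => (1 + a₂ * lam ^ s) / (1 + a₁ * lam ^ s))
      atTop (𝓝 (a₂ / a₁)) := by
    have hinv : Tendsto (fun lam : ℝ => (lam ^ s)⁻¹) atTop (𝓝 0) :=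
      (tendsto_rpow_atTop hs).inv_tendsto_atTop
    have := (hinv.const_add a₂ |>.div (hinv.const_add a₁) (by positivity) :
        Tendsto (fun lam : ℝ => (a₂ + (lam ^ s)⁻¹) / (a₁ + (lam ^ s)⁻¹)) atTop
          (𝓝 ((a₂ + 0) / (a₁ + 0))))
    rw [add_zero, add_zero] at this
    refine this.congr' ?_
    filter_upwards [eventually_gt_atTop (0:ℝ)] with lam hlam
    have hp : (0:ℝ) < lam ^ s := Real.rpow_pos_of_pos hlam s
    simp only [Pi.div_apply]
    field_simp
    ring
  have := hratio.log (by positivity)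
  refine this.congr' ?_
  filter_upwards [eventually_gt_atTop (0:ℝ)] with lam hlam
  have hp : (0:ℝ) < lam ^ s := Real.rpow_pos_of_pos hlam s
  rw [Real.log_div (by positivity) (by positivity)]

/-- Larger blockage area eventually improves the outdoor mmWave bound:
for `c, k, s > 0` and `0 ≤ S₁ < S₂`, with
`h_S(λ) = (1 − √(S/λ))·log(1 + c·e^{k·S}·λ^s)`, there is `Λ` such that
`h_{S₂}(λ) > h_{S₁}(λ)` for all `λ ≥ Λ`. -/
theorem larger_blockage_eventually_better
    (c k s S₁ S₂ : ℝ) (hc : 0 < c) (hk : 0 < k) (hs : 0 < s)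
    (hS₁ : 0 ≤ S₁) (hS : S₁ < S₂) :
    ∃ Λ : ℝ, ∀ lam : ℝ, Λ ≤ lam →
      (1 - Real.sqrt (S₂ / lam)) * Real.log (1 + c * Real.exp (k * S₂) * lam ^ s) >
      (1 - Real.sqrt (S₁ / lam)) * Real.log (1 + c * Real.exp (k * S₁) * lam ^ s) := by
  set a₁ := c * Real.exp (k * S₁) with ha₁def
  set a₂ := c * Real.exp (k * S₂) with ha₂def
  have h1 : 0 < a₁ := mul_pos hc (Real.exp_pos _)
  have h2 : 0 < a₂ := mul_pos hc (Real.exp_pos _)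
  have hS₂ : 0 ≤ S₂ := le_trans hS₁ hS.le
  have hL : 0 < Real.log (a₂ / a₁) := by
    apply Real.log_pos
    rw [one_lt_div h1]
    exact mul_lt_mul_of_pos_left (Real.exp_lt_exp.mpr (by nlinarith)) hc
  have hmain : Tendsto (fun lam : ℝ =>
      (1 - Real.sqrt (S₂ / lam)) * Real.log (1 + a₂ * lam ^ s) -
      (1 - Real.sqrt (S₁ / lam)) * Real.log (1 + a₁ * lam ^ s))
      atTop (𝓝 (Real.log (a₂ / a₁))) := by
    have := ((aux_log_diff a₁ a₂ s h1 h2 hs).sub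
        (aux_sqrt_log S₂ a₂ s hS₂ h2 hs)).add (aux_sqrt_log S₁ a₁ s hS₁ h1 hs)
    rw [sub_zero, add_zero] at this
    refine this.congr (fun lam => ?_)
    ring
  have hev : ∀ᶠ lam : ℝ in atTop,
      0 < (1 - Real.sqrt (S₂ / lam)) * Real.log (1 + a₂ * lam ^ s) -
          (1 - Real.sqrt (S₁ / lam)) * Real.log (1 + a₁ * lam ^ s) :=
    hmain.eventually (eventually_gt_nhds hL)
  obtain ⟨Λ, hΛ⟩ := eventually_atTop.mp hev
  exact ⟨Λ, fun lam hlam => by have := hΛ lam hlam; linarith⟩
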